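/- Let a ∈ Z^n with n ≥ 2, all entries nonzero and gcd(a) = 1, suppose a has at least one positive and at least one negative entry, and let b ∈ Z. Then the polyhedron P(a,b) = {x ∈ R^n_{≥0} : a^T x = b} is unbounded and nonempty. -/
import Mathlib


/-- if the primitive integer vector `a` (nonzero entries, `n ≥ 2`)
has at least one positive and at least one negative entry, then for every
`b ∈ ℤ` the knapsack polyhedron `P(a,b)` is nonempty and unbounded. -/
theorem stmt_11 (n : ℕ) (hn : 2 ≤ n) (a : Fin n → ℤ) (ha : ∀ i, a i ≠ 0)
    (hgcd : Finset.univ.gcd a = 1)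
    (hpos : ∃ i, 0 < a i) (hneg : ∃ i, a i < 0) (b : ℤ)
    (P : Set (Fin n → ℝ))
    (hP : P = {x | (∀ i, 0 ≤ x i) ∧ ∑ i, (a i : ℝ) * x i = (b : ℝ)}) :
    P.Nonempty ∧ ∀ R : ℝ, ∃ x ∈ P, R < ‖x‖ := by
  obtain ⟨i, hi⟩ := hpos
  obtain ⟨j, hj⟩ := hneg
  have hij : i ≠ j := by
    rintro rfl; exact absurd hi (not_lt.2 hj.le)
  have key : ∀ R : ℝ, ∃ x ∈ P, R < ‖x‖ := by
    intro R
    set t : ℝ := max (R + 1) |(b : ℝ)| with ht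
    have ht0 : 0 ≤ t := le_trans (abs_nonneg _) (le_max_right _ _)
    have htb : (b : ℝ) + t ≥ 0 := by
      have := le_max_right (R + 1) |(b : ℝ)|
      have := neg_abs_le (b : ℝ)
      linarith
    have haj : (a j : ℝ) ≤ -1 := by
      have : a j ≤ -1 := by omega
      exact_mod_cast this
    have hnum : 0 ≤ (b : ℝ) - a j * t := by
      nlinarith
    have hai : (0 : ℝ) < a i := by exact_mod_cast hi
    set A : ℝ := ((b : ℝ) - a j * t) / a i with hA
    have hA0 : 0 ≤ A := div_nonneg hnum hai.le
    set x : Fin n → ℝ := fun k => if k = i then A else if k = j then t else 0 with hx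
    have hxi : x i = A := by simp [hx]
    have hxj : x j = t := by simp [hx, hij.symm]
    refine ⟨x, ?_, ?_⟩
    · rw [hP]
      constructor
      · intro k
        by_cases hk : k = i
        · simp [hx, hk, hA0]
        · by_cases hk' : k = j
          · simp [hx, hk, hk', hij.symm, ht0]
          · simp [hx, hk, hk']
      · have hsum : ∑ k, (a k : ℝ) * x k = (a i : ℝ) * x i + (a j : ℝ) * x j := by
          apply Finset.sum_eq_add i j hij
          · rintro k _ ⟨hk, hk'⟩
            simp [hx, hk, hk']
          · simp
          · simp
        rw [hsum, hxi, hxj, hA, mul_div_cancel₀ _ hai.ne']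
        ring
    · have : t ≤ ‖x‖ := by
        have h1 : |x j| ≤ ‖x‖ := norm_le_pi_norm x j
        rw [hxj, abs_of_nonneg ht0] at h1
        exact h1
      have : R + 1 ≤ ‖x‖ := le_trans (le_max_left _ _) this
      linarith
  exact ⟨(key 0).elim fun x hx => ⟨x, hx.1⟩, key⟩
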